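/- Let Γ be a totally ordered abelian group of rank 1 and let j, j' : Γ → ℝ>0 be two injective homomorphisms of ordered groups. Then there exists a unique real number e > 0 such that j' = j^e (i.e. j'(γ) = j(γ)^e for all γ ∈ Γ). -/

import Mathlib

section Aux

variable {Γ : Type*} [CommGroup Γ] [LinearOrder Γ] [IsOrderedMonoid Γ]

/-- Auxiliary: the log of a multiplicative map into positive reals is additive,
hence sends `zpow` to integer multiples. -/
lemma stmt9_log_zpow (j : Γ → ℝ) (hjpos : ∀ γ, 0 < j γ)
    (hjmul : ∀ a b, j (a * b) = j a * j b) :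
    ∀ (n : ℤ) (γ : Γ), Real.log (j (γ ^ n)) = n * Real.log (j γ) := by
  have hj1 : j 1 = 1 := by
    have h := hjmul 1 1
    rw [one_mul] at h
    exact (mul_left_cancel₀ (hjpos 1).ne' (show j 1 * 1 = j 1 * j 1 by
      rw [mul_one, ← h]) : (1 : ℝ) = j 1).symm
  have hpow : ∀ (n : ℕ) (γ : Γ), j (γ ^ n) = j γ ^ n := by
    intro n γ
    induction n with
    | zero => simpa using hj1
    | succ k ih => rw [pow_succ, hjmul, ih, pow_succ]
  have hinv : ∀ γ : Γ, j γ⁻¹ = (j γ)⁻¹ := by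
    intro γ
    exact eq_inv_of_mul_eq_one_right (by rw [← hjmul, mul_inv_cancel]; exact hj1)
  have hz : ∀ (n : ℤ) (γ : Γ), j (γ ^ n) = j γ ^ n := by
    intro n γ
    cases n with
    | ofNat k => simpa using hpow k γ
    | negSucc k => rw [zpow_negSucc, hinv, hpow, zpow_negSucc]
  intro n γ
  rw [hz, Real.log_zpow]
end Aux

/-- Two injective order-preserving homomorphisms `j, j'` from a
nontrivial rank-1 totally ordered abelian group `Γ` into `ℝ>0` differ by a
unique positive real exponent: `j' = j ^ e`. Rank 1 is encoded by the
archimedean property. -/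
theorem stmt9 {Γ : Type*} [CommGroup Γ] [LinearOrder Γ] [IsOrderedMonoid Γ] [Nontrivial Γ]
    (harch : ∀ γ δ : Γ, γ < 1 → ∃ n : ℕ, γ ^ n < δ)
    (j j' : Γ → ℝ)
    (hjpos : ∀ γ, 0 < j γ) (hj'pos : ∀ γ, 0 < j' γ)
    (hjmul : ∀ a b, j (a * b) = j a * j b)
    (hj'mul : ∀ a b, j' (a * b) = j' a * j' b)
    (hjmono : Monotone j) (hj'mono : Monotone j')
    (hjinj : Function.Injective j) (hj'inj : Function.Injective j') :
    ∃! e : ℝ, 0 < e ∧ ∀ γ, j' γ = j γ ^ e := by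
  -- strict monotonicity
  have hSj : StrictMono j := hjmono.strictMono_of_injective hjinj
  have hSj' : StrictMono j' := hj'mono.strictMono_of_injective hj'inj
  -- j 1 = 1
  have hj1 : j 1 = 1 := by
    have h := hjmul 1 1
    rw [one_mul] at h
    exact (mul_left_cancel₀ (hjpos 1).ne' (show j 1 * 1 = j 1 * j 1 by
      rw [mul_one, ← h]) : (1 : ℝ) = j 1).symm
  have hj'1 : j' 1 = 1 := by
    have h := hj'mul 1 1
    rw [one_mul] at h
    exact (mul_left_cancel₀ (hj'pos 1).ne' (show j' 1 * 1 = j' 1 * j' 1 by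
      rw [mul_one, ← h]) : (1 : ℝ) = j' 1).symm
  -- logarithms
  set f : Γ → ℝ := fun γ => Real.log (j γ) with hf
  set g : Γ → ℝ := fun γ => Real.log (j' γ) with hg
  have hSf : StrictMono f := fun a b h => Real.log_lt_log (hjpos a) (hSj h)
  have hSg : StrictMono g := fun a b h => Real.log_lt_log (hj'pos a) (hSj' h)
  have hf1 : f 1 = 0 := by simp [hf, hj1]
  have hg1 : g 1 = 0 := by simp [hg, hj'1]
  have hfz := stmt9_log_zpow j hjpos hjmul
  have hgz := stmt9_log_zpow j' hj'pos hj'mul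
  -- a fixed element γ₀ > 1
  obtain ⟨γ₁, hγ₁⟩ := exists_ne (1 : Γ)
  obtain ⟨γ₀, hγ₀⟩ : ∃ γ₀ : Γ, 1 < γ₀ := by
    rcases lt_or_gt_of_ne hγ₁ with h | h
    · exact ⟨γ₁⁻¹, one_lt_inv_of_inv (by simpa using h)⟩
    · exact ⟨γ₁, h⟩
  have hf0 : 0 < f γ₀ := by rw [← hf1]; exact hSf hγ₀
  have hg0 : 0 < g γ₀ := by rw [← hg1]; exact hSg hγ₀
  -- comparison transfer
  have cmp : ∀ (γ : Γ) (p q : ℤ), ((q : ℝ) * f γ < p * f γ₀ ↔ (q : ℝ) * g γ < p * g γ₀) := by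
    intro γ p q
    have h1 : (q : ℝ) * f γ = f (γ ^ q) := (hfz q γ).symm
    have h2 : (p : ℝ) * f γ₀ = f (γ₀ ^ p) := (hfz p γ₀).symm
    have h3 : (q : ℝ) * g γ = g (γ ^ q) := (hgz q γ).symm
    have h4 : (p : ℝ) * g γ₀ = g (γ₀ ^ p) := (hgz p γ₀).symm
    rw [h1, h2, h3, h4, hSf.lt_iff_lt, hSg.lt_iff_lt]
  -- ratio equality
  have key : ∀ γ : Γ, g γ * f γ₀ = f γ * g γ₀ := by
    intro γ
    by_contra hne
    rcases lt_or_gt_of_ne hne with h | h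
    · -- g γ / g γ₀ < f γ / f γ₀
      have hlt : g γ / g γ₀ < f γ / f γ₀ := by
        rw [div_lt_div_iff₀ hg0 hf0]; linarith
      obtain ⟨r, hr1, hr2⟩ := exists_rat_btwn hlt
      have hrden : (0 : ℝ) < (r.den : ℝ) := by exact_mod_cast r.pos
      have hr : (r : ℝ) = (r.num : ℝ) / (r.den : ℝ) := by exact_mod_cast (Rat.num_div_den r).symm
      have hA : (r.den : ℝ) * g γ < r.num * g γ₀ := by
        have := (div_lt_div_iff₀ hg0 hrden).mp (by rw [← hr]; exact hr1)
        push_cast at this ⊢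
        linarith
      have hB : (r.num : ℝ) * f γ₀ < r.den * f γ := by
        have := (div_lt_div_iff₀ hrden hf0).mp (by rw [← hr]; exact hr2)
        push_cast at this ⊢
        linarith
      have := (cmp γ r.num (r.den : ℤ)).mpr (by push_cast; linarith)
      push_cast at this
      linarith
    · -- f γ / f γ₀ < g γ / g γ₀
      have hlt : f γ / f γ₀ < g γ / g γ₀ := by
        rw [div_lt_div_iff₀ hf0 hg0]; linarith
      obtain ⟨r, hr1, hr2⟩ := exists_rat_btwn hlt
      have hrden : (0 : ℝ) < (r.den : ℝ) := by exact_mod_cast r.pos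
      have hr : (r : ℝ) = (r.num : ℝ) / (r.den : ℝ) := by exact_mod_cast (Rat.num_div_den r).symm
      have hA : (r.den : ℝ) * f γ < r.num * f γ₀ := by
        have := (div_lt_div_iff₀ hf0 hrden).mp (by rw [← hr]; exact hr1)
        push_cast at this ⊢
        linarith
      have hB : (r.num : ℝ) * g γ₀ < r.den * g γ := by
        have := (div_lt_div_iff₀ hrden hg0).mp (by rw [← hr]; exact hr2)
        push_cast at this ⊢
        linarith
      have := (cmp γ r.num (r.den : ℤ)).mp (by push_cast; linarith)
      push_cast at this
      linarith
  -- the exponent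
  refine ⟨g γ₀ / f γ₀, ⟨div_pos hg0 hf0, ?_⟩, ?_⟩
  · intro γ
    have hge : g γ = (g γ₀ / f γ₀) * f γ := by
      field_simp
      linarith [key γ]
    have : j γ ^ (g γ₀ / f γ₀) = Real.exp ((g γ₀ / f γ₀) * Real.log (j γ)) := by
      rw [Real.rpow_def_of_pos (hjpos γ)]
      ring_nf
    rw [this, ← hge]
    exact (Real.exp_log (hj'pos γ)).symm
  · rintro e' ⟨he'pos, he'⟩
    have h1 : g γ₀ = e' * f γ₀ := by
      show Real.log (j' γ₀) = e' * Real.log (j γ₀)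
      rw [he' γ₀, Real.log_rpow (hjpos γ₀)]
    rw [h1, mul_div_assoc, div_self hf0.ne', mul_one]
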